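/- arXiv:1602.00765 — 2 statements merged into one kernel-verified Lean document; each statement's English description precedes it below -/
import Mathlib

section
/- Let L_1(x) = I_{H_1} + Σ_{j=1}^g A_j x_j and L_2(x) = I_{H_2} + Σ_{j=1}^g B_j x_j be monic linear operator pencils with bounded self-adjoint coefficients on separable real Hilbert spaces H_1, H_2, and suppose D_{ʰL_1}(1) ⊆ D_{ʰL_2}(1). Then for each n ∈ ℕ the following are equivalent: (i) D_{ʰL_1}(n) ⊆ D_{ʰL_2}(n); (ii) for all real n×n matrices Y, X_1, …, X_g (not necessarily symmetric), if the bounded operator on H_1^n with (i,k) block Y_{ik} I_{H_1} + Σ_{j=1}^g (X_j)_{ik} A_j is positive semidefinite, then the bounded operator on H_2^n with (i,k) block Y_{ik} I_{H_2} + Σ_{j=1}^g (X_j)_{ik} B_j is positive semidefinite. -/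
open scoped RealInnerProductSpace

noncomputable section

variable {E H K : Type*}

/-- A bounded operator on a real inner product space is symmetric (self-adjoint). -/
def OpIsSymm [NormedAddCommGroup E] [InnerProductSpace ℝ E] (T : E →L[ℝ] E) : Prop :=
  ∀ u v : E, ⟪T u, v⟫ = ⟪u, T v⟫

/-- A bounded operator on a real inner product space is positive semidefinite. -/
def OpIsPos [NormedAddCommGroup E] [InnerProductSpace ℝ E] (T : E →L[ℝ] E) : Prop :=
  OpIsSymm T ∧ ∀ v : E, 0 ≤ ⟪T v, v⟫

/-- A bounded operator is positive definite: `T - ε • id` is positive semidefinite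
for some `ε > 0`. -/
def OpIsPosDef [NormedAddCommGroup E] [InnerProductSpace ℝ E] (T : E →L[ℝ] E) : Prop :=
  ∃ ε : ℝ, 0 < ε ∧ OpIsPos (T - ε • ContinuousLinearMap.id ℝ E)

/-- The block operator on the Hilbert direct sum `H^n` whose `(i,k)` block is `c i k`. -/
def blockOp [NormedAddCommGroup H] [InnerProductSpace ℝ H] {n : ℕ}
    (c : Fin n → Fin n → (H →L[ℝ] H)) :
    (PiLp 2 fun _ : Fin n => H) →L[ℝ] (PiLp 2 fun _ : Fin n => H) :=
  (((PiLp.continuousLinearEquiv 2 ℝ (fun _ : Fin n => H)).symm.toContinuousLinearMap.comp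
    (ContinuousLinearMap.pi fun i : Fin n =>
      ∑ k : Fin n, (c i k).comp (ContinuousLinearMap.proj k))).comp
    (PiLp.continuousLinearEquiv 2 ℝ (fun _ : Fin n => H)).toContinuousLinearMap)

/-- Evaluation of the homogeneous linear pencil `I_H x₀ + Σ_j A_j x_j` at a tuple of
`n × n` matrices: the operator on `H^n` with `(i,k)` block
`(X₀)_{ik} I_H + Σ_j (X_j)_{ik} A_j`. -/
def hEval [NormedAddCommGroup H] [InnerProductSpace ℝ H] {g n : ℕ}
    (A : Fin g → (H →L[ℝ] H)) (X0 : Matrix (Fin n) (Fin n) ℝ)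
    (X : Fin g → Matrix (Fin n) (Fin n) ℝ) :
    (PiLp 2 fun _ : Fin n => H) →L[ℝ] (PiLp 2 fun _ : Fin n => H) :=
  blockOp fun i k => X0 i k • (1 : H →L[ℝ] H) + ∑ j, X j i k • A j

/-- Evaluation of the monic linear pencil `I_H + Σ_j A_j x_j` at a tuple of
`n × n` matrices. -/
def monicEval [NormedAddCommGroup H] [InnerProductSpace ℝ H] {g n : ℕ}
    (A : Fin g → (H →L[ℝ] H)) (X : Fin g → Matrix (Fin n) (Fin n) ℝ) :
    (PiLp 2 fun _ : Fin n => H) →L[ℝ] (PiLp 2 fun _ : Fin n => H) :=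
  hEval A 1 X

/-- Positivity of the evaluation `L(X) = A₀ ⊗ I_K + Σ_j A_j ⊗ X_j` of a linear operator
pencil at a tuple of bounded operators on a Hilbert space `K`. -/
def operPencilPos [NormedAddCommGroup H] [InnerProductSpace ℝ H]
    [NormedAddCommGroup K] [InnerProductSpace ℝ K] {g : ℕ}
    (A0 : H →L[ℝ] H) (A : Fin g → (H →L[ℝ] H)) (X : Fin g → (K →L[ℝ] K)) : Prop :=
  ∀ (m : ℕ) (h : Fin m → H) (u : Fin m → K),
    0 ≤ ∑ i, ∑ l,
      (⟪A0 (h i), h l⟫ * ⟪u i, u l⟫ + ∑ j, ⟪A j (h i), h l⟫ * ⟪X j (u i), u l⟫)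

/-- A bundled separable real Hilbert space. -/
structure SepHilbert where
  carrier : Type
  [nacg : NormedAddCommGroup carrier]
  [ips : InnerProductSpace ℝ carrier]
  [cs : CompleteSpace carrier]
  [sep : TopologicalSpace.SeparableSpace carrier]

attribute [instance] SepHilbert.nacg SepHilbert.ips SepHilbert.cs SepHilbert.sep


section Aux

variable {H : Type*}

lemma blockOp_apply [NormedAddCommGroup H] [InnerProductSpace ℝ H] {n : ℕ}
    (c : Fin n → Fin n → (H →L[ℝ] H)) (v : PiLp 2 fun _ : Fin n => H) (i : Fin n) :
    blockOp c v i = ∑ k, c i k (v k) := by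
  simp [blockOp, ContinuousLinearMap.pi]

/-- blocks of a pencil evaluation -/
def blk [NormedAddCommGroup H] [InnerProductSpace ℝ H] {g n : ℕ}
    (A : Fin g → (H →L[ℝ] H)) (X0 : Matrix (Fin n) (Fin n) ℝ)
    (X : Fin g → Matrix (Fin n) (Fin n) ℝ) (i k : Fin n) : H →L[ℝ] H :=
  X0 i k • (1 : H →L[ℝ] H) + ∑ j, X j i k • A j

lemma hEval_eq_blockOp [NormedAddCommGroup H] [InnerProductSpace ℝ H] {g n : ℕ}
    (A : Fin g → (H →L[ℝ] H)) (X0 : Matrix (Fin n) (Fin n) ℝ)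
    (X : Fin g → Matrix (Fin n) (Fin n) ℝ) :
    hEval A X0 X = blockOp (blk A X0 X) := rfl

lemma blockOp_congr [NormedAddCommGroup H] [InnerProductSpace ℝ H] {n : ℕ}
    {c d : Fin n → Fin n → (H →L[ℝ] H)} (h : ∀ i k, c i k = d i k) :
    blockOp c = blockOp d := by
  have : c = d := funext fun i => funext fun k => h i k
  rw [this]

lemma blockOp_inj [NormedAddCommGroup H] [InnerProductSpace ℝ H] {n : ℕ}
    {c d : Fin n → Fin n → (H →L[ℝ] H)} (h : blockOp c = blockOp d) (i k : Fin n) :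
    c i k = d i k := by
  ext x
  have hv := DFunLike.congr_fun h (WithLp.toLp 2 (Pi.single k x : ∀ _ : Fin n, H) : PiLp 2 fun _ : Fin n => H)
  have := congrArg (fun w : PiLp 2 (fun _ : Fin n => H) => w i) hv
  rw [blockOp_apply, blockOp_apply] at this
  simpa [Pi.single_apply, apply_ite] using this

end Aux

section Aux2

variable {H : Type*}

lemma blk_opIsSymm [NormedAddCommGroup H] [InnerProductSpace ℝ H] {g n : ℕ}
    {A : Fin g → (H →L[ℝ] H)} (hA : ∀ j, OpIsSymm (A j)) (X0 : Matrix (Fin n) (Fin n) ℝ)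
    (X : Fin g → Matrix (Fin n) (Fin n) ℝ) (i k : Fin n) :
    OpIsSymm (blk A X0 X i k) := by
  intro u v
  simp only [blk, ContinuousLinearMap.add_apply, ContinuousLinearMap.smul_apply,
    ContinuousLinearMap.sum_apply, ContinuousLinearMap.one_apply,
    inner_add_left, inner_add_right, real_inner_smul_left, real_inner_smul_right,
    sum_inner, inner_sum]
  congr 1
  exact Finset.sum_congr rfl fun j _ => by rw [hA j u v]

lemma inner_blockOp [NormedAddCommGroup H] [InnerProductSpace ℝ H] {n : ℕ}
    (c : Fin n → Fin n → (H →L[ℝ] H)) (u v : PiLp 2 fun _ : Fin n => H) :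
    ⟪blockOp c u, v⟫ = ∑ i, ∑ k, ⟪c i k (u k), v i⟫ := by
  rw [PiLp.inner_apply]
  exact Finset.sum_congr rfl fun i _ => by rw [blockOp_apply, sum_inner]

/-- transpose relation -/
lemma inner_hEval_transpose [NormedAddCommGroup H] [InnerProductSpace ℝ H] {g n : ℕ}
    {A : Fin g → (H →L[ℝ] H)} (hA : ∀ j, OpIsSymm (A j)) (X0 : Matrix (Fin n) (Fin n) ℝ)
    (X : Fin g → Matrix (Fin n) (Fin n) ℝ) (u v : PiLp 2 fun _ : Fin n => H) :
    ⟪u, hEval A X0 X v⟫ = ⟪hEval A X0.transpose (fun j => (X j).transpose) u, v⟫ := by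
  rw [real_inner_comm, hEval_eq_blockOp, hEval_eq_blockOp, inner_blockOp, inner_blockOp,
    Finset.sum_comm]
  refine Finset.sum_congr rfl fun k _ => Finset.sum_congr rfl fun i _ => ?_
  rw [blk_opIsSymm hA X0 X i k (v k) (u i), real_inner_comm (v k)]
  have hbl : blk A X0 X i k = blk A X0.transpose (fun j => (X j).transpose) k i := by
    simp [blk, Matrix.transpose_apply]
  rw [hbl]

lemma symm_quad_zero [NormedAddCommGroup H] [InnerProductSpace ℝ H]
    (T : H →L[ℝ] H) (hs : OpIsSymm T) (hq : ∀ v : H, ⟪T v, v⟫ = 0) : T = 0 := by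
  ext u
  refine ext_inner_right ℝ fun v => ?_
  have h1 := hq (u + v)
  have h2 : ⟪T v, u⟫ = ⟪T u, v⟫ := by rw [hs v u, real_inner_comm]
  simp only [map_add, inner_add_left, inner_add_right, hq u, hq v] at h1
  rw [h2] at h1
  have : ⟪T u, v⟫ = 0 := by linarith
  simp [this]

end Aux2


section Aux3

lemma blockOp_zero_blocks {H : Type*} [NormedAddCommGroup H] [InnerProductSpace ℝ H] {n : ℕ} :
    blockOp (fun _ _ : Fin n => (0 : H →L[ℝ] H)) = 0 := by
  refine ContinuousLinearMap.ext fun v => PiLp.ext fun i => ?_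
  rw [blockOp_apply]
  simp

lemma blk_smul_add {H : Type*} [NormedAddCommGroup H] [InnerProductSpace ℝ H] {g n : ℕ}
    (C : Fin g → (H →L[ℝ] H)) (Y Y' : Matrix (Fin n) (Fin n) ℝ)
    (X X' : Fin g → Matrix (Fin n) (Fin n) ℝ) (i k : Fin n) :
    blk C ((2⁻¹ : ℝ) • (Y + Y')) (fun j => (2⁻¹ : ℝ) • (X j + X' j)) i k
      = (2⁻¹ : ℝ) • blk C Y X i k + (2⁻¹ : ℝ) • blk C Y' X' i k := by
  simp only [blk, Matrix.smul_apply, Matrix.add_apply, smul_eq_mul, mul_smul, add_smul,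
    smul_add, Finset.sum_add_distrib, Finset.smul_sum]
  abel

lemma blk_sub {H : Type*} [NormedAddCommGroup H] [InnerProductSpace ℝ H] {g n : ℕ}
    (C : Fin g → (H →L[ℝ] H)) (Y Y' : Matrix (Fin n) (Fin n) ℝ)
    (X X' : Fin g → Matrix (Fin n) (Fin n) ℝ) (i k : Fin n) :
    blk C Y X i k - blk C Y' X' i k
      = (Y i k - Y' i k) • (1 : H →L[ℝ] H) + ∑ j, (X j i k - X' j i k) • C j := by
  simp only [blk, sub_smul, Finset.sum_sub_distrib]
  abel

/-- Level-1 transfer: if a linear combination of `I` and the `A j` vanishes, so does the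
corresponding combination of `I` and the `B j`. -/
lemma level1 {g : ℕ} {H1 H2 : Type}
    [NormedAddCommGroup H1] [InnerProductSpace ℝ H1]
    [NormedAddCommGroup H2] [InnerProductSpace ℝ H2]
    (A : Fin g → (H1 →L[ℝ] H1)) (B : Fin g → (H2 →L[ℝ] H2))
    (hB : ∀ j, OpIsSymm (B j))
    (h1 : ∀ (X0 : Matrix (Fin 1) (Fin 1) ℝ) (X : Fin g → Matrix (Fin 1) (Fin 1) ℝ),
      X0.IsSymm → (∀ j, (X j).IsSymm) →
      OpIsPos (hEval A X0 X) → OpIsPos (hEval B X0 X))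
    (y : ℝ) (x : Fin g → ℝ)
    (hz : y • (1 : H1 →L[ℝ] H1) + ∑ j, x j • A j = 0) :
    y • (1 : H2 →L[ℝ] H2) + ∑ j, x j • B j = 0 := by
  set X0 : Matrix (Fin 1) (Fin 1) ℝ := Matrix.of fun _ _ => y with hX0
  set Xm : Fin g → Matrix (Fin 1) (Fin 1) ℝ := fun j => Matrix.of fun _ _ => x j with hXm
  have hs0 : X0.IsSymm := by ext i k; rfl
  have hsX : ∀ j, (Xm j).IsSymm := fun j => by ext i k; rfl
  have hs0' : (-X0).IsSymm := by ext i k; rfl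
  have hsX' : ∀ j, (-(Xm j)).IsSymm := fun j => by ext i k; rfl
  have hbA : ∀ i k : Fin 1, blk A X0 Xm i k = 0 := fun i k => hz
  have hbA' : ∀ i k : Fin 1, blk A (-X0) (fun j => -(Xm j)) i k = 0 := by
    intro i k
    have : blk A (-X0) (fun j => -(Xm j)) i k = -(blk A X0 Xm i k) := by
      simp only [blk, Matrix.neg_apply, Pi.neg_apply, neg_smul, neg_add,
        Finset.sum_neg_distrib]
    rw [this, hbA i k, neg_zero]
  have hevA : hEval A X0 Xm = 0 := by
    rw [hEval_eq_blockOp, ← blockOp_zero_blocks]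
    exact blockOp_congr hbA
  have hevA' : hEval A (-X0) (fun j => -(Xm j)) = 0 := by
    rw [hEval_eq_blockOp, ← blockOp_zero_blocks]
    exact blockOp_congr hbA'
  have hzeroPos : OpIsPos (0 : (PiLp 2 fun _ : Fin 1 => H1) →L[ℝ] (PiLp 2 fun _ : Fin 1 => H1)) :=
    ⟨fun u v => by simp, fun v => by simp⟩
  have hp1 : OpIsPos (hEval B X0 Xm) := h1 X0 Xm hs0 hsX (by rw [hevA]; exact hzeroPos)
  have hp2 : OpIsPos (hEval B (-X0) (fun j => -(Xm j))) :=
    h1 _ _ hs0' hsX' (by rw [hevA']; exact hzeroPos)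
  have hneg : hEval B (-X0) (fun j => -(Xm j)) = -(hEval B X0 Xm) := by
    rw [hEval_eq_blockOp, hEval_eq_blockOp]
    have : ∀ i k : Fin 1, blk B (-X0) (fun j => -(Xm j)) i k = -(blk B X0 Xm i k) := by
      intro i k
      simp only [blk, Matrix.neg_apply, Pi.neg_apply, neg_smul, neg_add,
        Finset.sum_neg_distrib]
    refine ContinuousLinearMap.ext fun v => PiLp.ext fun i => ?_
    rw [blockOp_apply]
    simp only [this]
    simp [blockOp_apply]
  have hq : ∀ v, ⟪hEval B X0 Xm v, v⟫ = 0 := by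
    intro v
    have h2 := hp2.2 v
    rw [hneg] at h2
    simp only [ContinuousLinearMap.neg_apply, inner_neg_left] at h2
    have h3 := hp1.2 v
    linarith
  have hT0 : hEval B X0 Xm = 0 := symm_quad_zero _ hp1.1 hq
  have hb0 : blk B X0 Xm 0 0 = 0 := by
    have : blockOp (blk B X0 Xm) = blockOp (fun _ _ : Fin 1 => (0 : H2 →L[ℝ] H2)) := by
      rw [blockOp_zero_blocks, ← hEval_eq_blockOp]; exact hT0
    exact blockOp_inj this 0 0
  exact hb0

end Aux3


/-- `n`-positivity of the unital map `A_j ↦ B_j` is equivalent to the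
inclusion `D_{ʰL₁}(n) ⊆ D_{ʰL₂}(n)` of the homogenized free spectrahedra at level `n`. -/
theorem n_positivity_iff_homogeneous_inclusion
    {g : ℕ} {H1 H2 : Type}
    [NormedAddCommGroup H1] [InnerProductSpace ℝ H1] [CompleteSpace H1]
    [TopologicalSpace.SeparableSpace H1]
    [NormedAddCommGroup H2] [InnerProductSpace ℝ H2] [CompleteSpace H2]
    [TopologicalSpace.SeparableSpace H2]
    (A : Fin g → (H1 →L[ℝ] H1)) (B : Fin g → (H2 →L[ℝ] H2))
    (hA : ∀ j, OpIsSymm (A j)) (hB : ∀ j, OpIsSymm (B j))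
    (h1 : ∀ (X0 : Matrix (Fin 1) (Fin 1) ℝ) (X : Fin g → Matrix (Fin 1) (Fin 1) ℝ),
      X0.IsSymm → (∀ j, (X j).IsSymm) →
      OpIsPos (hEval A X0 X) → OpIsPos (hEval B X0 X))
    (n : ℕ) :
    (∀ (X0 : Matrix (Fin n) (Fin n) ℝ) (X : Fin g → Matrix (Fin n) (Fin n) ℝ),
        X0.IsSymm → (∀ j, (X j).IsSymm) →
        OpIsPos (hEval A X0 X) → OpIsPos (hEval B X0 X)) ↔
    (∀ (Y : Matrix (Fin n) (Fin n) ℝ) (X : Fin g → Matrix (Fin n) (Fin n) ℝ),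
        OpIsPos (hEval A Y X) → OpIsPos (hEval B Y X)) := by
  constructor
  · intro hsymc Y X hpos
    have heqA : hEval A Y.transpose (fun j => (X j).transpose) = hEval A Y X := by
      refine ContinuousLinearMap.ext fun u => ?_
      refine ext_inner_right ℝ fun v => ?_
      rw [← inner_hEval_transpose hA Y X u v, ← hpos.1 u v]
    have hblkA : ∀ i k, blk A Y.transpose (fun j => (X j).transpose) i k = blk A Y X i k := by
      intro i k
      refine blockOp_inj ?_ i k
      rw [← hEval_eq_blockOp, ← hEval_eq_blockOp]
      exact heqA
    have hblkB : ∀ i k, blk B Y.transpose (fun j => (X j).transpose) i k = blk B Y X i k := by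
      intro i k
      have hz1 : (Y k i - Y i k) • (1 : H1 →L[ℝ] H1)
          + ∑ j, (X j k i - X j i k) • A j = 0 := by
        have e := blk_sub A Y.transpose Y (fun j => (X j).transpose) X i k
        simp only [Matrix.transpose_apply] at e
        rw [← e, hblkA i k, sub_self]
      have hz2 := level1 A B hB h1 _ _ hz1
      have e := blk_sub B Y.transpose Y (fun j => (X j).transpose) X i k
      simp only [Matrix.transpose_apply] at e
      rw [hz2] at e
      exact sub_eq_zero.mp e
    have hYsSymm : ((2⁻¹ : ℝ) • (Y + Y.transpose)).IsSymm := by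
      rw [Matrix.IsSymm, Matrix.transpose_smul, Matrix.transpose_add, Matrix.transpose_transpose,
        add_comm]
    have hXsSymm : ∀ j, ((2⁻¹ : ℝ) • (X j + (X j).transpose)).IsSymm := fun j => by
      rw [Matrix.IsSymm, Matrix.transpose_smul, Matrix.transpose_add, Matrix.transpose_transpose,
        add_comm]
    have hA2 : hEval A ((2⁻¹ : ℝ) • (Y + Y.transpose))
        (fun j => (2⁻¹ : ℝ) • (X j + (X j).transpose)) = hEval A Y X := by
      rw [hEval_eq_blockOp, hEval_eq_blockOp]
      refine blockOp_congr fun i k => ?_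
      rw [blk_smul_add A Y Y.transpose X (fun j => (X j).transpose) i k, hblkA i k, ← add_smul]
      norm_num
    have hB2 : hEval B ((2⁻¹ : ℝ) • (Y + Y.transpose))
        (fun j => (2⁻¹ : ℝ) • (X j + (X j).transpose)) = hEval B Y X := by
      rw [hEval_eq_blockOp, hEval_eq_blockOp]
      refine blockOp_congr fun i k => ?_
      rw [blk_smul_add B Y Y.transpose X (fun j => (X j).transpose) i k, hblkB i k, ← add_smul]
      norm_num
    rw [← hB2]
    refine hsymc _ _ hYsSymm hXsSymm ?_
    rw [hA2]
    exact hpos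
  · intro h X0 X _ _ hp
    exact h X0 X hp

end
end

section
/- Let L_1(x) = I_{H_1} + Σ_{j=1}^g A_j x_j and L_2(x) = I_{H_2} + Σ_{j=1}^g B_j x_j be monic linear operator pencils with bounded self-adjoint coefficients on separable real Hilbert spaces H_1, H_2. Then D_{ʰL_1}(n) = D_{ʰL_2}(n) for all n ∈ ℕ if and only if ∂D_{ʰL_1}(n) = ∂D_{ʰL_2}(n) for all n ∈ ℕ, where ∂D_{ʰL}(n) = {X ∈ Sₙ^{g+1} : ʰL(X) ⪰ 0 and ʰL(X) is not positive definite}. -/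
open scoped RealInnerProductSpace

noncomputable section

variable {E H K : Type*}

section AuxHelpers

variable [NormedAddCommGroup H] [InnerProductSpace ℝ H]

lemma aux_blockOp_apply {n : ℕ} (c : Fin n → Fin n → (H →L[ℝ] H))
    (v : PiLp 2 fun _ : Fin n => H) (i : Fin n) :
    blockOp c v i = ∑ k, c i k (v k) := by
  simp [blockOp]

lemma aux_hEval_apply {g n : ℕ} (A : Fin g → (H →L[ℝ] H)) (X0 : Matrix (Fin n) (Fin n) ℝ)
    (X : Fin g → Matrix (Fin n) (Fin n) ℝ) (v : PiLp 2 fun _ : Fin n => H) (i : Fin n) :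
    hEval A X0 X v i = ∑ k, (X0 i k • v k + ∑ j, X j i k • A j (v k)) := by
  simp [hEval, aux_blockOp_apply]

lemma aux_hEval_add_smul_one {g n : ℕ} (A : Fin g → (H →L[ℝ] H))
    (X0 : Matrix (Fin n) (Fin n) ℝ)
    (X : Fin g → Matrix (Fin n) (Fin n) ℝ) (t : ℝ) :
    hEval A (X0 + t • 1) X = hEval A X0 X + t • ContinuousLinearMap.id ℝ _ := by
  refine ContinuousLinearMap.ext fun v => ?_
  refine PiLp.ext fun i => ?_
  have h1 : ∀ k : Fin n, ((t • (1 : Matrix (Fin n) (Fin n) ℝ)) i k) • v k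
      = (if i = k then t • (v k) else 0) := by
    intro k
    by_cases h : i = k <;> simp [h, Matrix.smul_apply, Matrix.one_apply]
  simp only [ContinuousLinearMap.add_apply, aux_hEval_apply, Matrix.add_apply,
    ContinuousLinearMap.coe_smul', Pi.smul_apply, ContinuousLinearMap.coe_id', id_eq,
    PiLp.add_apply, PiLp.smul_apply, add_smul]
  rw [show ∀ a b c : Fin n → H, (∑ k, (a k + b k + c k)) = (∑ k, (a k + c k)) + ∑ k, b k
    from fun a b c => by rw [Finset.sum_add_distrib, Finset.sum_add_distrib,
      Finset.sum_add_distrib]; abel]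
  simp only [h1, Finset.sum_ite_eq, Finset.mem_univ, if_true]

lemma aux_hEval_symm {g n : ℕ} (A : Fin g → (H →L[ℝ] H)) (X0 : Matrix (Fin n) (Fin n) ℝ)
    (X : Fin g → Matrix (Fin n) (Fin n) ℝ) (hX0 : X0.IsSymm) (hX : ∀ j, (X j).IsSymm)
    (hA : ∀ j, OpIsSymm (A j)) : OpIsSymm (hEval A X0 X) := by
  intro u v
  simp only [PiLp.inner_apply, aux_hEval_apply, sum_inner, inner_sum, inner_add_left,
    inner_add_right, real_inner_smul_left, real_inner_smul_right]
  rw [Finset.sum_comm]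
  refine Finset.sum_congr rfl fun i _ => Finset.sum_congr rfl fun k _ => ?_
  have hj : ∀ j, X j k i * ⟪A j (u i), v k⟫ = X j i k * ⟪u i, A j (v k)⟫ := fun j => by
    rw [(hX j).apply, hA j (u i) (v k)]
  simp [hj, hX0.apply]

end AuxHelpers

section AuxOps
variable {E : Type*} [NormedAddCommGroup E] [InnerProductSpace ℝ E]

lemma aux_shift_inner (T : E →L[ℝ] E) (t : ℝ) (v : E) :
    ⟪(T + t • ContinuousLinearMap.id ℝ E) v, v⟫ = ⟪T v, v⟫ + t * ⟪v, v⟫ := by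
  simp [inner_add_left, real_inner_smul_left]

lemma aux_opIsSymm_shift {T : E →L[ℝ] E} (hT : OpIsSymm T) (t : ℝ) :
    OpIsSymm (T + t • ContinuousLinearMap.id ℝ E) := by
  intro u v
  simp [OpIsSymm, inner_add_left, inner_add_right, real_inner_smul_left,
    real_inner_smul_right, hT u v, mul_comm]

lemma aux_shift_eq (T : E →L[ℝ] E) (t s : ℝ) :
    T + s • ContinuousLinearMap.id ℝ E
      = (T + t • ContinuousLinearMap.id ℝ E) + (s - t) • ContinuousLinearMap.id ℝ E := by
  rw [add_assoc, ← add_smul]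
  congr 1
  ring_nf

lemma aux_opIsPos_shift_mono {T : E →L[ℝ] E} {t s : ℝ}
    (h : OpIsPos (T + t • ContinuousLinearMap.id ℝ E)) (hts : t ≤ s) :
    OpIsPos (T + s • ContinuousLinearMap.id ℝ E) := by
  rw [aux_shift_eq T t s]
  refine ⟨aux_opIsSymm_shift h.1 _, fun v => ?_⟩
  rw [aux_shift_inner]
  have h1 := h.2 v
  have h2 : (0:ℝ) ≤ ⟪v, v⟫ := real_inner_self_nonneg
  nlinarith

lemma aux_opIsPos_norm_shift {T : E →L[ℝ] E} (hT : OpIsSymm T) :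
    OpIsPos (T + ‖T‖ • ContinuousLinearMap.id ℝ E) := by
  refine ⟨aux_opIsSymm_shift hT _, fun v => ?_⟩
  rw [aux_shift_inner, real_inner_self_eq_norm_mul_norm]
  have h1 := abs_real_inner_le_norm (T v) v
  have h2 := T.le_opNorm v
  have h4 := (abs_le.mp h1).1
  have h5 : (0:ℝ) ≤ ‖v‖ := norm_nonneg v
  nlinarith [mul_le_mul_of_nonneg_right h2 h5]

lemma aux_opIsPosDef_shift_iff (T : E →L[ℝ] E) (t : ℝ) :
    OpIsPosDef (T + t • ContinuousLinearMap.id ℝ E) ↔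
      ∃ ε : ℝ, 0 < ε ∧ OpIsPos (T + (t - ε) • ContinuousLinearMap.id ℝ E) := by
  have key : ∀ ε : ℝ, (T + t • ContinuousLinearMap.id ℝ E) - ε • ContinuousLinearMap.id ℝ E
      = T + (t - ε) • ContinuousLinearMap.id ℝ E := by
    intro ε
    rw [sub_eq_add_neg, ← neg_smul, add_assoc, ← add_smul, ← sub_eq_add_neg]
  simp only [OpIsPosDef, key]

lemma aux_exists_boundary (T : E →L[ℝ] E) (hsym : OpIsSymm T)
    (hne : ∃ t : ℝ, ¬ OpIsPos (T + t • ContinuousLinearMap.id ℝ E)) :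
    ∃ t₀ : ℝ, (OpIsPos (T + t₀ • ContinuousLinearMap.id ℝ E) ∧
        ¬ OpIsPosDef (T + t₀ • ContinuousLinearMap.id ℝ E)) ∧
      ∀ s, OpIsPos (T + s • ContinuousLinearMap.id ℝ E) → t₀ ≤ s := by
  set S : Set ℝ := {t | OpIsPos (T + t • ContinuousLinearMap.id ℝ E)} with hS
  have hSne : S.Nonempty := ⟨‖T‖, aux_opIsPos_norm_shift hsym⟩
  obtain ⟨t', ht'⟩ := hne
  have hbdd : BddBelow S := by
    refine ⟨t', fun s hs => ?_⟩
    by_contra hlt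
    push_neg at hlt
    exact ht' (aux_opIsPos_shift_mono hs (le_of_lt hlt))
  set t₀ := sInf S with ht₀
  have hmin : ∀ s, OpIsPos (T + s • ContinuousLinearMap.id ℝ E) → t₀ ≤ s :=
    fun s hs => csInf_le hbdd hs
  have hgt : ∀ u, t₀ < u → OpIsPos (T + u • ContinuousLinearMap.id ℝ E) := by
    intro u hu
    obtain ⟨s, hs, hsu⟩ := exists_lt_of_csInf_lt hSne hu
    exact aux_opIsPos_shift_mono hs (le_of_lt hsu)
  have hmem : OpIsPos (T + t₀ • ContinuousLinearMap.id ℝ E) := by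
    refine ⟨aux_opIsSymm_shift hsym _, fun v => ?_⟩
    have key : ∀ δ : ℝ, 0 < δ → 0 ≤ ⟪T v, v⟫ + (t₀ + δ) * ⟪v, v⟫ := by
      intro δ hδ
      have := (hgt (t₀ + δ) (by linarith)).2 v
      rwa [aux_shift_inner] at this
    have hiv : (0:ℝ) ≤ ⟪v, v⟫ := real_inner_self_nonneg
    rw [aux_shift_inner]
    by_contra hneg
    push_neg at hneg
    rcases eq_or_lt_of_le hiv with h0 | hpos
    · nlinarith [key 1 one_pos]
    · set δ := (-(⟪T v, v⟫ + t₀ * ⟪v, v⟫)) / (2 * ⟪v, v⟫) with hδdef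
      have hδ : 0 < δ := div_pos (by linarith) (by linarith)
      have hkey := key δ hδ
      have hδv : δ * ⟪v, v⟫ = -(⟪T v, v⟫ + t₀ * ⟪v, v⟫) / 2 := by
        rw [hδdef]; field_simp
      nlinarith
  refine ⟨t₀, ⟨hmem, ?_⟩, hmin⟩
  rw [aux_opIsPosDef_shift_iff]
  rintro ⟨ε, hε, hp⟩
  have := hmin _ hp
  linarith

lemma aux_transfer {E F : Type*} [NormedAddCommGroup E] [InnerProductSpace ℝ E]
    [NormedAddCommGroup F] [InnerProductSpace ℝ F]
    (S : E →L[ℝ] E) (T : F →L[ℝ] F) (hTsymm : OpIsSymm T)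
    (hb : ∀ t : ℝ, (OpIsPos (S + t • ContinuousLinearMap.id ℝ E) ∧
          ¬ OpIsPosDef (S + t • ContinuousLinearMap.id ℝ E)) ↔
        (OpIsPos (T + t • ContinuousLinearMap.id ℝ F) ∧
          ¬ OpIsPosDef (T + t • ContinuousLinearMap.id ℝ F)))
    (hS : OpIsPos S) : OpIsPos T := by
  have hS0 : OpIsPos (S + (0:ℝ) • ContinuousLinearMap.id ℝ E) := by simpa using hS
  by_cases hall : ∀ t : ℝ, OpIsPos (S + t • ContinuousLinearMap.id ℝ E)
  · by_contra hT0
    have hT0' : ¬ OpIsPos (T + (0:ℝ) • ContinuousLinearMap.id ℝ F) := by simpa using hT0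
    obtain ⟨t₀, ⟨hpos, hnpd⟩, -⟩ := aux_exists_boundary T hTsymm ⟨0, hT0'⟩
    obtain ⟨hSpos, hSnpd⟩ := (hb t₀).mpr ⟨hpos, hnpd⟩
    apply hSnpd
    rw [aux_opIsPosDef_shift_iff]
    exact ⟨1, one_pos, hall (t₀ - 1)⟩
  · push_neg at hall
    obtain ⟨t₀, ⟨hpos, hnpd⟩, hmin⟩ := aux_exists_boundary S hS.1 hall
    obtain ⟨hTpos, -⟩ := (hb t₀).mp ⟨hpos, hnpd⟩
    have h0 : t₀ ≤ 0 := hmin 0 hS0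
    have := aux_opIsPos_shift_mono hTpos h0
    simpa using this
end AuxOps


/-- the homogenized free spectrahedra of two monic pencils coincide at
all levels iff their boundaries (psd but not pd points) coincide at all levels. -/
theorem homogeneous_equality_iff_boundary_equality
    {g : ℕ} {H1 H2 : Type}
    [NormedAddCommGroup H1] [InnerProductSpace ℝ H1] [CompleteSpace H1]
    [TopologicalSpace.SeparableSpace H1]
    [NormedAddCommGroup H2] [InnerProductSpace ℝ H2] [CompleteSpace H2]
    [TopologicalSpace.SeparableSpace H2]
    (A : Fin g → (H1 →L[ℝ] H1)) (B : Fin g → (H2 →L[ℝ] H2))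
    (hA : ∀ j, OpIsSymm (A j)) (hB : ∀ j, OpIsSymm (B j)) :
    (∀ (n : ℕ) (X0 : Matrix (Fin n) (Fin n) ℝ) (X : Fin g → Matrix (Fin n) (Fin n) ℝ),
        X0.IsSymm → (∀ j, (X j).IsSymm) →
        (OpIsPos (hEval A X0 X) ↔ OpIsPos (hEval B X0 X))) ↔
    (∀ (n : ℕ) (X0 : Matrix (Fin n) (Fin n) ℝ) (X : Fin g → Matrix (Fin n) (Fin n) ℝ),
        X0.IsSymm → (∀ j, (X j).IsSymm) →
        ((OpIsPos (hEval A X0 X) ∧ ¬ OpIsPosDef (hEval A X0 X)) ↔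
          (OpIsPos (hEval B X0 X) ∧ ¬ OpIsPosDef (hEval B X0 X)))) := by
  have hsymM : ∀ (n : ℕ) (X0 : Matrix (Fin n) (Fin n) ℝ) (t : ℝ), X0.IsSymm →
      (X0 + t • (1 : Matrix (Fin n) (Fin n) ℝ)).IsSymm := by
    intro n X0 t h
    unfold Matrix.IsSymm at *
    rw [Matrix.transpose_add, Matrix.transpose_smul, Matrix.transpose_one, h]
  constructor
  · intro hD n X0 X hX0 hX
    have eA : ∀ ε : ℝ, hEval A X0 X - ε • ContinuousLinearMap.id ℝ _ =
        hEval A (X0 + (-ε) • 1) X := by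
      intro ε
      rw [aux_hEval_add_smul_one]
      module
    have eB : ∀ ε : ℝ, hEval B X0 X - ε • ContinuousLinearMap.id ℝ _ =
        hEval B (X0 + (-ε) • 1) X := by
      intro ε
      rw [aux_hEval_add_smul_one]
      module
    have hpd : OpIsPosDef (hEval A X0 X) ↔ OpIsPosDef (hEval B X0 X) := by
      constructor <;> rintro ⟨ε, hε, hp⟩ <;> refine ⟨ε, hε, ?_⟩
      · rw [eB]
        rw [eA] at hp
        exact (hD n _ X (hsymM n X0 (-ε) hX0) hX).mp hp
      · rw [eA]
        rw [eB] at hp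
        exact (hD n _ X (hsymM n X0 (-ε) hX0) hX).mpr hp
    have hp := hD n X0 X hX0 hX
    exact ⟨fun h => ⟨hp.mp h.1, fun c => h.2 (hpd.mpr c)⟩,
      fun h => ⟨hp.mpr h.1, fun c => h.2 (hpd.mp c)⟩⟩
  · intro hBd n X0 X hX0 hX
    have hb : ∀ t : ℝ,
        (OpIsPos (hEval A X0 X + t • ContinuousLinearMap.id ℝ _) ∧
          ¬ OpIsPosDef (hEval A X0 X + t • ContinuousLinearMap.id ℝ _)) ↔
        (OpIsPos (hEval B X0 X + t • ContinuousLinearMap.id ℝ _) ∧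
          ¬ OpIsPosDef (hEval B X0 X + t • ContinuousLinearMap.id ℝ _)) := by
      intro t
      have := hBd n (X0 + t • 1) X (hsymM n X0 t hX0) hX
      rwa [aux_hEval_add_smul_one, aux_hEval_add_smul_one] at this
    exact ⟨fun h => aux_transfer _ _ (aux_hEval_symm B X0 X hX0 hX hB) hb h,
      fun h => aux_transfer _ _ (aux_hEval_symm A X0 X hX0 hX hA)
        (fun t => (hb t).symm) h⟩
end
end
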